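/- For fixed real M with 0 < M ≤ N and fixed integer N ≥ 1, the function K ↦ K·(1−M/N)·min{(N/(KM))·(1−(1−M/N)^K), N/K}, defined for positive reals K, is concave in K. -/

import Mathlib

/-- For fixed `0 < M ≤ N` (`N ≥ 1` an integer), the peak rate
`K ↦ K(1−M/N)·min{(N/(KM))(1−(1−M/N)^K), N/K}` is concave in the real variable `K > 0`. -/
theorem peak_rate_concave_in_K (N : ℕ) (hN : 1 ≤ N) (M : ℝ) (hM0 : 0 < M) (hMN : M ≤ N) :
    ConcaveOn ℝ (Set.Ioi (0 : ℝ))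
      (fun K : ℝ => K * (1 - M / N) *
        min ((N / (K * M)) * (1 - (1 - M / N) ^ K)) ((N : ℝ) / K)) := by
  have hN0 : (0 : ℝ) < N := by exact_mod_cast Nat.pos_of_ne_zero (by omega)
  rcases eq_or_lt_of_le hMN with hMN' | hMN'
  · -- M = N : the function is identically 0
    have hfun : (fun K : ℝ => K * (1 - M / N) *
        min ((N / (K * M)) * (1 - (1 - M / N) ^ K)) ((N : ℝ) / K)) = fun _ => (0 : ℝ) := by
      funext K
      rw [hMN', div_self hN0.ne']
      ring
    rw [hfun]
    exact concaveOn_const 0 (convex_Ioi 0)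
  · -- M < N : set q = 1 - M/N ∈ (0,1)
    set q : ℝ := 1 - M / N with hqdef
    have hq0 : 0 < q := by
      have : M / N < 1 := (div_lt_one hN0).mpr hMN'
      simp [hqdef]; linarith
    have hq1 : q ≤ 1 := by
      have : 0 < M / N := div_pos hM0 hN0
      simp [hqdef]; linarith
    -- convexity of K ↦ q ^ K
    have cv : ConvexOn ℝ (Set.Ioi (0 : ℝ)) (fun K : ℝ => q ^ K) := by
      refine ⟨convex_Ioi 0, fun x _ y _ a b ha hb hab => ?_⟩
      have h := convexOn_exp.2 (Set.mem_univ (Real.log q * x)) (Set.mem_univ (Real.log q * y))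
        ha hb hab
      simp only [smul_eq_mul] at h ⊢
      rw [Real.rpow_def_of_pos hq0, Real.rpow_def_of_pos hq0, Real.rpow_def_of_pos hq0]
      calc Real.exp (Real.log q * (a * x + b * y))
          = Real.exp (a * (Real.log q * x) + b * (Real.log q * y)) := by ring_nf
        _ ≤ a * Real.exp (Real.log q * x) + b * Real.exp (Real.log q * y) := h
    -- concavity of the simplified function
    have c1 : ConcaveOn ℝ (Set.Ioi (0 : ℝ))
        (fun K : ℝ => q * min ((N / M) * (1 - q ^ K)) N) := by
      have cA : ConcaveOn ℝ (Set.Ioi (0 : ℝ)) (fun K : ℝ => (N / M) * (1 - q ^ K)) := by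
        have h1 : ConcaveOn ℝ (Set.Ioi (0 : ℝ)) (fun K : ℝ => 1 - q ^ K) := by
          have := (concaveOn_const (1 : ℝ) (convex_Ioi 0)).add cv.neg
          simpa [sub_eq_add_neg, Pi.add_def, Pi.neg_def] using this
        have := h1.smul (c := N / M) (le_of_lt (div_pos hN0 hM0))
        simpa [smul_eq_mul] using this
      have cB : ConcaveOn ℝ (Set.Ioi (0 : ℝ)) (fun _ : ℝ => (N : ℝ)) :=
        concaveOn_const _ (convex_Ioi 0)
      have := (cA.inf cB).smul (c := q) hq0.le
      simpa [smul_eq_mul, Pi.inf_apply] using this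
    -- transfer to the original function
    refine ⟨convex_Ioi 0, fun x hx y hy a b ha hb hab => ?_⟩
    have key : ∀ K : ℝ, K ∈ Set.Ioi (0 : ℝ) →
        K * q * min ((N / (K * M)) * (1 - q ^ K)) ((N : ℝ) / K)
          = q * min ((N / M) * (1 - q ^ K)) N := by
      intro K hK
      have hK0 : 0 < K := hK
      rw [mul_comm K q, mul_assoc, mul_min_of_nonneg _ _ hK0.le]
      congr 2
      · field_simp
      · field_simp
    have hmem : a • x + b • y ∈ Set.Ioi (0 : ℝ) := (convex_Ioi 0) hx hy ha hb hab
    have h2 := c1.2 hx hy ha hb hab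
    simp only [smul_eq_mul] at *
    rw [key x hx, key y hy, key _ hmem]
    exact h2
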